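/- Let Q be a probability measure, H ≥ 0 a Q-integrable random variable, c ≥ 0, x₀ ≥ 0. For any nonnegative random variable X with E^Q[X] ≤ x₀, the set A := {(H - X)⁺ ≤ c} satisfies E^Q[1_A (H - c)⁺] ≤ x₀. Consequently, sup over X of P((H-X)⁺ ≤ c) subject to E^Q[X] ≤ x₀ equals sup over measurable sets A of P(A) subject to E^Q[1_A(H-c)⁺] ≤ x₀. -/
import Mathlib


open MeasureTheory

theorem complete_market_reduction
    {Ω : Type*} [MeasurableSpace Ω]
    (P Q : Measure Ω) [IsProbabilityMeasure P] [IsProbabilityMeasure Q]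
    (H : Ω → ℝ) (hHm : Measurable H) (hH0 : ∀ ω, 0 ≤ H ω) (hHint : Integrable H Q)
    (c x₀ : ℝ) (hc : 0 ≤ c) (hx₀ : 0 ≤ x₀) :
    (∀ X : Ω → ℝ, Measurable X → (∀ ω, 0 ≤ X ω) → Integrable X Q →
      ∫ ω, X ω ∂Q ≤ x₀ →
      ∫ ω, Set.indicator {ω | max (H ω - X ω) 0 ≤ c}
        (fun ω => max (H ω - c) 0) ω ∂Q ≤ x₀) ∧
    (⨆ (X : Ω → ℝ) (_ : Measurable X ∧ (∀ ω, 0 ≤ X ω) ∧ Integrable X Q ∧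
        ∫ ω, X ω ∂Q ≤ x₀), P {ω | max (H ω - X ω) 0 ≤ c}) =
      (⨆ (A : Set Ω) (_ : MeasurableSet A ∧
        ∫ ω, Set.indicator A (fun ω => max (H ω - c) 0) ω ∂Q ≤ x₀), P A) := by
  have hHc : Integrable (fun ω => max (H ω - c) 0) Q :=
    (hHint.sub (integrable_const c)).pos_part
  have hHcm : Measurable (fun ω => max (H ω - c) 0) :=
    (hHm.sub measurable_const).max measurable_const
  have key : ∀ X : Ω → ℝ, Measurable X → (∀ ω, 0 ≤ X ω) → Integrable X Q →
      ∫ ω, X ω ∂Q ≤ x₀ →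
      ∫ ω, Set.indicator {ω | max (H ω - X ω) 0 ≤ c}
        (fun ω => max (H ω - c) 0) ω ∂Q ≤ x₀ := by
    intro X hXm hX0 hXint hXle
    have hA : MeasurableSet {ω | max (H ω - X ω) 0 ≤ c} :=
      measurableSet_le ((hHm.sub hXm).max measurable_const) measurable_const
    have hle : ∀ ω, Set.indicator {ω | max (H ω - X ω) 0 ≤ c}
        (fun ω => max (H ω - c) 0) ω ≤ X ω := by
      intro ω
      by_cases h : ω ∈ {ω | max (H ω - X ω) 0 ≤ c}
      · rw [Set.indicator_of_mem h]
        simp only [Set.mem_setOf_eq] at h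
        have h1 : H ω - X ω ≤ c := le_trans (le_max_left _ _) h
        exact max_le (by linarith) (hX0 ω)
      · rw [Set.indicator_of_notMem h]; exact hX0 ω
    calc ∫ ω, Set.indicator {ω | max (H ω - X ω) 0 ≤ c}
          (fun ω => max (H ω - c) 0) ω ∂Q
        ≤ ∫ ω, X ω ∂Q := integral_mono (hHc.indicator hA) hXint hle
      _ ≤ x₀ := hXle
  refine ⟨key, le_antisymm ?_ ?_⟩
  · refine iSup₂_le fun X hX => ?_
    exact le_iSup₂_of_le {ω | max (H ω - X ω) 0 ≤ c}
      ⟨measurableSet_le ((hHm.sub hX.1).max measurable_const) measurable_const,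
        key X hX.1 hX.2.1 hX.2.2.1 hX.2.2.2⟩ le_rfl
  · refine iSup₂_le fun A hA => ?_
    set X : Ω → ℝ := A.indicator (fun ω => max (H ω - c) 0) with hXdef
    have hXm : Measurable X := hHcm.indicator hA.1
    have hX0 : ∀ ω, 0 ≤ X ω := fun ω =>
      Set.indicator_nonneg (fun ω _ => le_max_right _ _) ω
    have hXint : Integrable X Q := hHc.indicator hA.1
    have hsub : A ⊆ {ω | max (H ω - X ω) 0 ≤ c} := by
      intro ω hω
      simp only [Set.mem_setOf_eq, hXdef, Set.indicator_of_mem hω]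
      rcases le_or_gt (H ω - c) 0 with h | h
      · rw [max_eq_right h, sub_zero]
        exact max_le (by linarith) hc
      · rw [max_eq_left h.le]
        exact max_le (by linarith) hc
    exact le_iSup₂_of_le X ⟨hXm, hX0, hXint, hA.2⟩ (measure_mono hsub)
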